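/- Let γ ∈ (0,1), let (r_k)_{k∈ℤ} be bounded by R (|r_k| ≤ R), and let D be a random variable on {0,...,n-1}. Then |E_D[∑_{k≥t} γ^{k-t} r_{k-D}] − ∑_{k≥t} γ^{k-t} r_k| ≤ 2R·(1 − E[γ^D])/(1−γ). -/

import Mathlib

lemma delayed_single_bound (γ : ℝ) (hγ : γ ∈ Set.Ioo (0 : ℝ) 1) (t : ℤ) (r : ℤ → ℝ)
    (R : ℝ) (hR : ∀ k, |r k| ≤ R) (d : ℕ) :
    |(∑' k : ℕ, γ ^ k * r (t + k - d)) - ∑' k : ℕ, γ ^ k * r (t + k)| ≤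
      2 * R * (1 - γ ^ d) / (1 - γ) := by
  obtain ⟨hγ0, hγ1⟩ := hγ
  have hR0 : 0 ≤ R := le_trans (abs_nonneg _) (hR 0)
  have h1γ : 0 < 1 - γ := by linarith
  have hg : Summable fun k : ℕ => γ ^ k := summable_geometric_of_lt_one hγ0.le hγ1
  have key : ∀ g : ℕ → ℤ, Summable fun k : ℕ => γ ^ k * r (g k) := by
    intro g
    apply Summable.of_norm_bounded (hg.mul_left R)
    intro k
    rw [Real.norm_eq_abs, abs_mul, abs_pow, abs_of_pos hγ0]
    calc γ ^ k * |r (g k)| ≤ γ ^ k * R :=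
          mul_le_mul_of_nonneg_left (hR _) (pow_nonneg hγ0.le k)
      _ = R * γ ^ k := mul_comm _ _
  have habs : ∀ g : ℕ → ℤ, |∑' k : ℕ, γ ^ k * r (g k)| ≤ R / (1 - γ) := by
    intro g
    calc |∑' k : ℕ, γ ^ k * r (g k)| ≤ ∑' k : ℕ, |γ ^ k * r (g k)| := by
          simpa [abs_mul, abs_pow, abs_of_pos hγ0] using norm_tsum_le_tsum_norm (key g).norm
      _ ≤ ∑' k : ℕ, R * γ ^ k := by
          apply Summable.tsum_le_tsum _ (key g).abs (hg.mul_left R)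
          intro k
          rw [abs_mul, abs_pow, abs_of_pos hγ0, mul_comm]
          exact mul_le_mul_of_nonneg_right (hR _) (pow_nonneg hγ0.le k)
      _ = R / (1 - γ) := by
          rw [tsum_mul_left, tsum_geometric_of_lt_one hγ0.le hγ1, div_eq_mul_inv]
  set B := ∑' k : ℕ, γ ^ k * r (t + k) with hB
  have hshift := Summable.sum_add_tsum_nat_add (f := fun k : ℕ => γ ^ k * r (t + k - d)) d
      (key (fun k => t + k - d))
  have hrw : ∀ k : ℕ, γ ^ (k + d) * r (t + ↑(k + d) - d) = γ ^ d * (γ ^ k * r (t + k)) := by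
    intro k
    have harg : t + ((k : ℤ) + d) - d = t + k := by ring
    push_cast
    rw [harg, pow_add]
    ring
  have htail : (∑' k : ℕ, γ ^ (k + d) * r (t + ↑(k + d) - d)) = γ ^ d * B := by
    rw [show (fun k : ℕ => γ ^ (k + d) * r (t + ↑(k + d) - d)) =
        fun k : ℕ => γ ^ d * (γ ^ k * r (t + k)) from funext hrw, tsum_mul_left]
  have hA : (∑' k : ℕ, γ ^ k * r (t + k - d)) =
      (∑ k ∈ Finset.range d, γ ^ k * r (t + k - d)) + γ ^ d * B := by
    rw [← hshift, htail]
  have hgd : 0 ≤ 1 - γ ^ d := by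
    have := pow_le_one₀ hγ0.le hγ1.le (n := d)
    linarith
  have hS : |∑ k ∈ Finset.range d, γ ^ k * r (t + k - d)| ≤ R * (1 - γ ^ d) / (1 - γ) := by
    calc |∑ k ∈ Finset.range d, γ ^ k * r (t + k - d)|
        ≤ ∑ k ∈ Finset.range d, |γ ^ k * r (t + k - d)| := Finset.abs_sum_le_sum_abs _ _
      _ ≤ ∑ k ∈ Finset.range d, γ ^ k * R := by
          apply Finset.sum_le_sum
          intro k _
          rw [abs_mul, abs_pow, abs_of_pos hγ0]
          exact mul_le_mul_of_nonneg_left (hR _) (pow_nonneg hγ0.le k)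
      _ = (∑ k ∈ Finset.range d, γ ^ k) * R := by rw [Finset.sum_mul]
      _ = R * (1 - γ ^ d) / (1 - γ) := by
          have h' : γ - 1 ≠ 0 := by linarith
          rw [geom_sum_eq hγ1.ne]
          field_simp
          ring
  rw [hA]
  have hBb := habs (fun k => t + k)
  calc |(∑ k ∈ Finset.range d, γ ^ k * r (t + k - d)) + γ ^ d * B - B|
      = |(∑ k ∈ Finset.range d, γ ^ k * r (t + k - d)) + (γ ^ d - 1) * B| := by
        congr 1; ring
    _ ≤ |∑ k ∈ Finset.range d, γ ^ k * r (t + k - d)| + |(γ ^ d - 1) * B| := abs_add_le _ _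
    _ ≤ R * (1 - γ ^ d) / (1 - γ) + (1 - γ ^ d) * (R / (1 - γ)) := by
        apply add_le_add hS
        rw [abs_mul]
        have : |γ ^ d - 1| = 1 - γ ^ d := by rw [abs_sub_comm, abs_of_nonneg hgd]
        rw [this]
        exact mul_le_mul_of_nonneg_left hBb hgd
    _ = 2 * R * (1 - γ ^ d) / (1 - γ) := by field_simp; ring

theorem delayed_return_error_bound {n : ℕ} (γ : ℝ)
    (hγ : γ ∈ Set.Ioo (0 : ℝ) 1) (t : ℤ) (r : ℤ → ℝ) (R : ℝ)
    (hR : ∀ k, |r k| ≤ R)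
    (μ : Fin n → ℝ) (hμ : ∀ i, 0 ≤ μ i) (hμ1 : ∑ i, μ i = 1) :
    |(∑ i, μ i * ∑' k : ℕ, γ ^ k * r (t + k - (i : ℕ))) -
        ∑' k : ℕ, γ ^ k * r (t + k)| ≤
      2 * R * (1 - ∑ i, μ i * γ ^ (i : ℕ)) / (1 - γ) := by
  set B := ∑' k : ℕ, γ ^ k * r (t + k) with hB
  have hsplit : (∑ i, μ i * ∑' k : ℕ, γ ^ k * r (t + k - (i : ℕ))) - B =
      ∑ i, μ i * ((∑' k : ℕ, γ ^ k * r (t + k - (i : ℕ))) - B) := by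
    rw [Finset.sum_congr rfl (fun i _ => mul_sub (μ i) _ B), Finset.sum_sub_distrib,
      ← Finset.sum_mul, hμ1, one_mul]
  rw [hsplit]
  calc |∑ i, μ i * ((∑' k : ℕ, γ ^ k * r (t + k - (i : ℕ))) - B)|
      ≤ ∑ i, |μ i * ((∑' k : ℕ, γ ^ k * r (t + k - (i : ℕ))) - B)| :=
        Finset.abs_sum_le_sum_abs _ _
    _ ≤ ∑ i, μ i * (2 * R * (1 - γ ^ (i : ℕ)) / (1 - γ)) := by
        apply Finset.sum_le_sum
        intro i _
        rw [abs_mul, abs_of_nonneg (hμ i)]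
        exact mul_le_mul_of_nonneg_left
          (delayed_single_bound γ hγ t r R hR (i : ℕ)) (hμ i)
    _ = 2 * R * (1 - ∑ i, μ i * γ ^ (i : ℕ)) / (1 - γ) := by
        rw [Finset.sum_congr rfl (fun i _ => by ring :
          ∀ i ∈ Finset.univ, μ i * (2 * R * (1 - γ ^ (i : ℕ)) / (1 - γ)) =
            2 * R / (1 - γ) * μ i - 2 * R / (1 - γ) * (μ i * γ ^ (i : ℕ))),
          Finset.sum_sub_distrib, ← Finset.mul_sum, ← Finset.mul_sum, hμ1]
        ring
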